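/- arXiv:2602.15586 — 2 statements merged into one kernel-verified Lean document; each statement's English description precedes it below -/
import Mathlib

section
/- Let (Z_t)_{t ∈ ℤ} be a stationary 𝒵-valued process with β-mixing coefficients β(k), let a, μ ≥ 1 be integers with n = 2aμ, let M > 0, let ℱ be a finite set of measurable functions from 𝒵 to [0, M], and for each ℓ_f ∈ ℱ and j = 1, …, 2μ set h_f(B_j) = (1/a) Σ_{i=1}^a ℓ_f(Z_{a(j−1)+i}) and L(f) = E[ℓ_f(Z_1)]. Fix k ∈ {1, 2} and ε > 0, and let ν' be the product measure on (𝒵^a)^μ whose every factor is the law of the block (Z_1, …, Z_a). Then P( ∃ ℓ_f ∈ ℱ : L(f) − (1/μ) Σ_{j=0}^{μ−1} h_f(B_{k+2j}) ≥ ε ) ≤ ν'( ∃ ℓ_f ∈ ℱ : L(f) − (1/μ) Σ_{j=1}^{μ} h̃_f(j-th block) ≥ ε ) + (μ − 1) β(a), where h̃_f denotes the same block average applied to the coordinates of (𝒵^a)^μ. -/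
open MeasureTheory ProbabilityTheory

/-- Total variation distance between two measures. -/
noncomputable def tvDist {α : Type*} [MeasurableSpace α] (μ ν : Measure α) : ℝ :=
  ⨆ A : {A : Set α // MeasurableSet A}, |(μ A).toReal - (ν A).toReal|

/-- β-mixing coefficient of the process `Z` under `P`: the supremum over `t` of the
total variation distance between the joint law of `((Z s)_{s ≤ t}, (Z s)_{s ≥ t+k})`
and the product of the marginal laws. -/
noncomputable def betaMix {Ω 𝒵 : Type*} [MeasurableSpace Ω] [MeasurableSpace 𝒵]
    (P : Measure Ω) (Z : ℤ → Ω → 𝒵) (k : ℕ) : ℝ :=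
  ⨆ t : ℤ, tvDist
    (P.map (fun ω => (fun s : {s : ℤ // s ≤ t} => Z s ω,
                      fun s : {s : ℤ // t + k ≤ s} => Z s ω)))
    ((P.map (fun ω => fun s : {s : ℤ // s ≤ t} => Z s ω)).prod
      (P.map (fun ω => fun s : {s : ℤ // t + k ≤ s} => Z s ω)))

/-- Stationarity of the process `Z` under `P`. -/
def Stationary {Ω 𝒵 : Type*} [MeasurableSpace Ω] [MeasurableSpace 𝒵]
    (P : Measure Ω) (Z : ℤ → Ω → 𝒵) : Prop :=
  ∀ s : ℤ, P.map (fun ω => fun t : ℤ => Z (t + s) ω) = P.map (fun ω => fun t : ℤ => Z t ω)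

lemma abs_toReal_sub_le_one {α : Type*} [MeasurableSpace α] (μ ν : Measure α)
    [IsProbabilityMeasure μ] [IsProbabilityMeasure ν] (A : Set α) :
    |(μ A).toReal - (ν A).toReal| ≤ 1 := by
  have h1 : (μ A).toReal ≤ 1 := by
    simpa using ENNReal.toReal_mono (by simp) (prob_le_one (μ := μ) (s := A))
  have h2 : (ν A).toReal ≤ 1 := by
    simpa using ENNReal.toReal_mono (by simp) (prob_le_one (μ := ν) (s := A))
  have h3 : (0:ℝ) ≤ (μ A).toReal := ENNReal.toReal_nonneg
  have h4 : (0:ℝ) ≤ (ν A).toReal := ENNReal.toReal_nonneg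
  rw [abs_le]; constructor <;> linarith

lemma abs_le_tvDist {α : Type*} [MeasurableSpace α] (μ ν : Measure α)
    [IsProbabilityMeasure μ] [IsProbabilityMeasure ν] {A : Set α} (hA : MeasurableSet A) :
    |(μ A).toReal - (ν A).toReal| ≤ tvDist μ ν :=
  le_ciSup (f := fun A : {A : Set α // MeasurableSet A} => |(μ A).toReal - (ν A).toReal|)
    ⟨1, by rintro x ⟨B, rfl⟩; exact abs_toReal_sub_le_one μ ν B⟩ ⟨A, hA⟩

lemma tvDist_le_one {α : Type*} [MeasurableSpace α] (μ ν : Measure α)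
    [IsProbabilityMeasure μ] [IsProbabilityMeasure ν] : tvDist μ ν ≤ 1 := by
  haveI : Nonempty {A : Set α // MeasurableSet A} := ⟨⟨∅, MeasurableSet.empty⟩⟩
  exact ciSup_le fun A => abs_toReal_sub_le_one μ ν A

lemma tvDist_le_betaMix {Ω 𝒵 : Type*} [MeasurableSpace Ω] [MeasurableSpace 𝒵]
    (P : Measure Ω) [IsProbabilityMeasure P] (Z : ℤ → Ω → 𝒵) (hZ : ∀ t, Measurable (Z t))
    (a : ℕ) (t : ℤ) :
    tvDist
      (P.map (fun ω => (fun s : {s : ℤ // s ≤ t} => Z s ω,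
                        fun s : {s : ℤ // t + a ≤ s} => Z s ω)))
      ((P.map (fun ω => fun s : {s : ℤ // s ≤ t} => Z s ω)).prod
        (P.map (fun ω => fun s : {s : ℤ // t + a ≤ s} => Z s ω)))
      ≤ betaMix P Z a := by
  have hbdd : ∀ t' : ℤ,
      tvDist
        (P.map (fun ω => (fun s : {s : ℤ // s ≤ t'} => Z s ω,
                          fun s : {s : ℤ // t' + a ≤ s} => Z s ω)))
        ((P.map (fun ω => fun s : {s : ℤ // s ≤ t'} => Z s ω)).prod
          (P.map (fun ω => fun s : {s : ℤ // t' + a ≤ s} => Z s ω))) ≤ 1 := by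
    intro t'
    have hp : Measurable (fun ω => fun s : {s : ℤ // s ≤ t'} => Z s ω) :=
      measurable_pi_lambda _ fun s => hZ _
    have hf : Measurable (fun ω => fun s : {s : ℤ // t' + a ≤ s} => Z s ω) :=
      measurable_pi_lambda _ fun s => hZ _
    haveI : IsProbabilityMeasure (P.map (fun ω => (fun s : {s : ℤ // s ≤ t'} => Z s ω,
        fun s : {s : ℤ // t' + a ≤ s} => Z s ω))) :=
      Measure.isProbabilityMeasure_map (hp.prodMk hf).aemeasurable
    haveI : IsProbabilityMeasure (P.map (fun ω => fun s : {s : ℤ // s ≤ t'} => Z s ω)) :=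
      Measure.isProbabilityMeasure_map hp.aemeasurable
    haveI : IsProbabilityMeasure (P.map (fun ω => fun s : {s : ℤ // t' + a ≤ s} => Z s ω)) :=
      Measure.isProbabilityMeasure_map hf.aemeasurable
    exact tvDist_le_one _ _
  unfold betaMix
  exact le_ciSup (f := fun t : ℤ => tvDist
      (P.map (fun ω => (fun s : {s : ℤ // s ≤ t} => Z s ω,
                        fun s : {s : ℤ // t + a ≤ s} => Z s ω)))
      ((P.map (fun ω => fun s : {s : ℤ // s ≤ t} => Z s ω)).prod
        (P.map (fun ω => fun s : {s : ℤ // t + a ≤ s} => Z s ω))))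
    ⟨1, by rintro x ⟨t', rfl⟩; exact hbdd t'⟩ t


lemma hybrid_chain {Ω E : Type*} [MeasurableSpace Ω] [MeasurableSpace E]
    (P : Measure Ω) [IsProbabilityMeasure P]
    (ν : Measure E) [IsProbabilityMeasure ν]
    (X : ℕ → Ω → E) (hX : ∀ j, Measurable (X j)) (β : ℝ)
    (hlaw : ∀ j, P.map (X j) = ν)
    (hmix : ∀ j : ℕ, ∀ S : Set (E × (Fin j → E)), MeasurableSet S →
      |((P.map (fun ω => (X j ω, fun i : Fin j => X (i : ℕ) ω))) S).toReal
        - ((ν.prod (P.map (fun ω => fun i : Fin j => X (i : ℕ) ω))) S).toReal| ≤ β) :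
    ∀ m : ℕ, 1 ≤ m → ∀ S : Set (Fin m → E), MeasurableSet S →
      ((P.map (fun ω => fun i : Fin m => X (i : ℕ) ω)) S).toReal
        ≤ ((Measure.pi fun _ : Fin m => ν) S).toReal + ((m : ℝ) - 1) * β := by
  have hXm : ∀ m : ℕ, Measurable (fun ω => fun i : Fin m => X (i : ℕ) ω) :=
    fun m => measurable_pi_lambda _ fun i => hX _
  have hβ : 0 ≤ β := le_trans (abs_nonneg _) (hmix 0 ∅ MeasurableSet.empty)
  refine Nat.le_induction ?_ ?_
  · -- base case m = 1
    intro S hS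
    set e := MeasurableEquiv.funUnique (Fin 1) E with he
    have h1 : (Measure.pi fun _ : Fin 1 => ν).map e = ν :=
      (measurePreserving_funUnique ν (Fin 1)).map_eq
    have h2 : (Measure.pi fun _ : Fin 1 => ν) = ν.map ⇑e.symm := by
      have h2' := congrArg (Measure.map ⇑e.symm) h1
      rwa [Measure.map_map e.symm.measurable e.measurable,
        MeasurableEquiv.symm_comp_self, Measure.map_id] at h2'
    have h3 : P.map (fun ω => fun i : Fin 1 => X (i : ℕ) ω) = ν.map e.symm := by
      rw [← hlaw 0, Measure.map_map e.symm.measurable (hX 0)]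
      congr 1
      funext ω
      funext i
      have : (i : ℕ) = 0 := by omega
      simp [e, MeasurableEquiv.funUnique, Function.comp, this]
    rw [h3, ← h2]
    simp
  · -- inductive step
    intro m hm IH S hS
    set e := MeasurableEquiv.piFinSuccAbove (fun _ : Fin (m+1) => E) (Fin.last m) with he
    set T := ⇑e.symm ⁻¹' S with hTdef
    have hT : MeasurableSet T := e.symm.measurable hS
    set ρ := P.map (fun ω => fun i : Fin m => X (i : ℕ) ω) with hρ
    haveI : IsProbabilityMeasure ρ := Measure.isProbabilityMeasure_map (hXm m).aemeasurable
    have hcomp : (fun ω => (X m ω, fun i : Fin m => X (i : ℕ) ω))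
        = (⇑e) ∘ (fun ω => fun i : Fin (m+1) => X (i : ℕ) ω) := by
      funext ω
      refine Prod.ext ?_ ?_
      · simp [e, MeasurableEquiv.piFinSuccAbove]
      · funext i
        simp [e, MeasurableEquiv.piFinSuccAbove, Fin.succAbove_last, Fin.init]
    have h1 : (P.map (fun ω => (X m ω, fun i : Fin m => X (i : ℕ) ω))) T
        = (P.map (fun ω => fun i : Fin (m+1) => X (i : ℕ) ω)) S := by
      rw [hcomp, ← Measure.map_map e.measurable (hXm (m+1)),
        Measure.map_apply e.measurable hT]
      congr 1
      ext x
      simp [hTdef]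
    -- mixing step
    have h2 := hmix m T hT
    -- product comparison
    have hr : 0 ≤ ((m : ℝ) - 1) * β := by
      apply mul_nonneg _ hβ
      simp only [sub_nonneg]
      exact_mod_cast hm
    have h3 : (ν.prod ρ) T ≤ (ν.prod (Measure.pi fun _ : Fin m => ν)) T
        + ENNReal.ofReal (((m : ℝ) - 1) * β) := by
      rw [Measure.prod_apply hT, Measure.prod_apply hT]
      have hslice : ∀ x : E, ρ (Prod.mk x ⁻¹' T)
          ≤ (Measure.pi fun _ : Fin m => ν) (Prod.mk x ⁻¹' T)
            + ENNReal.ofReal (((m : ℝ) - 1) * β) := by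
        intro x
        have hsm : MeasurableSet (Prod.mk x ⁻¹' T) := measurable_prodMk_left hT
        have hIH := IH (Prod.mk x ⁻¹' T) hsm
        have hfin1 : ρ (Prod.mk x ⁻¹' T) ≠ ⊤ := measure_ne_top _ _
        have hfin2 : (Measure.pi fun _ : Fin m => ν) (Prod.mk x ⁻¹' T) ≠ ⊤ := measure_ne_top _ _
        calc ρ (Prod.mk x ⁻¹' T) = ENNReal.ofReal (ρ (Prod.mk x ⁻¹' T)).toReal :=
              (ENNReal.ofReal_toReal hfin1).symm
          _ ≤ ENNReal.ofReal (((Measure.pi fun _ : Fin m => ν) (Prod.mk x ⁻¹' T)).toReal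
                + ((m : ℝ) - 1) * β) := ENNReal.ofReal_le_ofReal hIH
          _ = ENNReal.ofReal (((Measure.pi fun _ : Fin m => ν) (Prod.mk x ⁻¹' T)).toReal)
                + ENNReal.ofReal (((m : ℝ) - 1) * β) :=
              ENNReal.ofReal_add ENNReal.toReal_nonneg hr
          _ = (Measure.pi fun _ : Fin m => ν) (Prod.mk x ⁻¹' T)
                + ENNReal.ofReal (((m : ℝ) - 1) * β) := by
              rw [ENNReal.ofReal_toReal hfin2]
      calc ∫⁻ x, ρ (Prod.mk x ⁻¹' T) ∂ν
          ≤ ∫⁻ x, ((Measure.pi fun _ : Fin m => ν) (Prod.mk x ⁻¹' T)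
              + ENNReal.ofReal (((m : ℝ) - 1) * β)) ∂ν := lintegral_mono hslice
        _ = ∫⁻ x, (Measure.pi fun _ : Fin m => ν) (Prod.mk x ⁻¹' T) ∂ν
              + ENNReal.ofReal (((m : ℝ) - 1) * β) := by
            rw [lintegral_add_right _ measurable_const, lintegral_const, measure_univ, mul_one]
    -- identify product with pi
    have hpres := (measurePreserving_piFinSuccAbove (fun _ : Fin (m+1) => ν) (Fin.last m)).map_eq
    have h4 : (ν.prod (Measure.pi fun _ : Fin m => ν)) T
        = (Measure.pi fun _ : Fin (m+1) => ν) S := by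
      rw [← hpres, Measure.map_apply e.measurable hT]
      congr 1
      ext x
      simp [hTdef]
    -- assemble
    have hfinS : (ν.prod (Measure.pi fun _ : Fin (m+1) => ν)) Set.univ ≠ ⊤ := by
      simp
    have h5 : ((ν.prod ρ) T).toReal
        ≤ ((Measure.pi fun _ : Fin (m+1) => ν) S).toReal + ((m : ℝ) - 1) * β := by
      have := ENNReal.toReal_mono (by
          rw [h4] at h3 ⊢
          exact ENNReal.add_ne_top.2 ⟨measure_ne_top _ _, ENNReal.ofReal_ne_top⟩) h3
      rw [h4, ENNReal.toReal_add (measure_ne_top _ _) ENNReal.ofReal_ne_top,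
        ENNReal.toReal_ofReal hr] at this
      exact this
    have h6 : ((P.map (fun ω => fun i : Fin (m+1) => X (i : ℕ) ω)) S).toReal
        ≤ ((ν.prod ρ) T).toReal + β := by
      rw [← h1]
      have := abs_le.1 h2
      linarith [this.1, this.2]
    have : ((m : ℝ) + 1 - 1) * β = ((m : ℝ) - 1) * β + β := by ring
    push_cast
    rw [this]
    linarith

/-- Coupling step for the block decomposition (proof of Theorem 2): the probability
that some `f ∈ ℱ` has a large deviation on the blocks `B_{k+2j}`, `j = 0, …, μ-1`
(with `k ∈ {1,2}`), is at most the corresponding probability for independent blocks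
(under the product measure `Measure.pi` of the common block law `νb`) plus
`(μ-1)·β(a)`.  Here `h_f(B_j) = (1/a) ∑_{i=1}^a f (Z (a(j-1)+i))` and
`L f = E[f (Z 1)]`. -/
theorem block_coupling_deviation
    {Ω 𝒵 : Type*} [MeasurableSpace Ω] [MeasurableSpace 𝒵]
    (P : Measure Ω) [IsProbabilityMeasure P]
    (Z : ℤ → Ω → 𝒵) (hZmeas : ∀ t, Measurable (Z t))
    (hstat : Stationary P Z)
    (a μ : ℕ) (ha : 1 ≤ a) (hμ : 1 ≤ μ)
    (n : ℕ) (hn : n = 2 * a * μ)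
    (M : ℝ) (hM : 0 < M)
    (ℱ : Finset (𝒵 → ℝ))
    (hFmeas : ∀ f ∈ ℱ, Measurable f)
    (hFbdd : ∀ f ∈ ℱ, ∀ z, f z ∈ Set.Icc (0 : ℝ) M)
    (k : ℕ) (hk : k = 1 ∨ k = 2)
    (ε : ℝ) (hε : 0 < ε)
    (νb : Measure (Fin a → 𝒵)) [IsProbabilityMeasure νb]
    (hνb : νb = P.map (fun ω => fun i : Fin a => Z (((i : ℕ) + 1 : ℕ) : ℤ) ω)) :
    (P {ω | ∃ f ∈ ℱ,
        ∫ ω', f (Z 1 ω') ∂P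
          - (1 / μ) * ∑ j : Fin μ, (1 / a) *
              ∑ i : Fin a, f (Z ((a * (k + 2 * (j : ℕ) - 1) + (i : ℕ) + 1 : ℕ) : ℤ) ω)
          ≥ ε}).toReal
      ≤ (Measure.pi (fun _ : Fin μ => νb) {x | ∃ f ∈ ℱ,
          ∫ ω', f (Z 1 ω') ∂P
            - (1 / μ) * ∑ j : Fin μ, (1 / a) * ∑ i : Fin a, f (x j i)
            ≥ ε}).toReal
        + ((μ : ℝ) - 1) * betaMix P Z a := by
  classical
  have hk1 : 1 ≤ k := by rcases hk with h | h <;> omega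
  set c : ℕ → ℕ := fun j => a * (k + 2 * j - 1) with hc
  set X : ℕ → Ω → Fin a → 𝒵 := fun j ω i => Z ((c j + (i : ℕ) + 1 : ℕ) : ℤ) ω with hXdef
  have hX : ∀ j, Measurable (X j) := fun j => measurable_pi_lambda _ fun i => hZmeas _
  have hXm : ∀ m : ℕ, Measurable (fun ω => fun i : Fin m => X (i : ℕ) ω) :=
    fun m => measurable_pi_lambda _ fun i => hX _
  -- law of a single block
  have hlaw : ∀ j, P.map (X j) = νb := by
    intro j
    have hπ : Measurable (fun g : ℤ → 𝒵 => fun i : Fin a => g (((i : ℕ) : ℤ) + 1)) :=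
      measurable_pi_lambda _ fun i => measurable_pi_apply _
    have hshift : Measurable (fun ω => fun t : ℤ => Z (t + (c j : ℤ)) ω) :=
      measurable_pi_lambda _ fun t => hZmeas _
    have hid : Measurable (fun ω => fun t : ℤ => Z t ω) :=
      measurable_pi_lambda _ fun t => hZmeas _
    have h1 : P.map (X j)
        = (P.map (fun ω => fun t : ℤ => Z (t + (c j : ℤ)) ω)).map
            (fun g : ℤ → 𝒵 => fun i : Fin a => g (((i : ℕ) : ℤ) + 1)) := by
      rw [Measure.map_map hπ hshift]
      congr 1
      funext ω
      funext i
      show Z ((c j + (i : ℕ) + 1 : ℕ) : ℤ) ω = Z ((((i : ℕ) : ℤ) + 1) + (c j : ℤ)) ω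
      congr 1
      push_cast
      ring
    rw [h1, hstat (c j), Measure.map_map hπ hid, hνb]
    congr 1
  -- mixing estimate for the joint law of (last block, previous blocks)
  have hmix : ∀ j : ℕ, ∀ S : Set ((Fin a → 𝒵) × (Fin j → Fin a → 𝒵)), MeasurableSet S →
      |((P.map (fun ω => (X j ω, fun i : Fin j => X (i : ℕ) ω))) S).toReal
        - ((νb.prod (P.map (fun ω => fun i : Fin j => X (i : ℕ) ω))) S).toReal|
        ≤ betaMix P Z a := by
    intro j S hS
    set t : ℤ := (c j : ℤ) - (a : ℤ) with ht
    have hpast : ∀ (i : Fin j) (i' : Fin a), ((c i + i' + 1 : ℕ) : ℤ) ≤ t := by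
      intro i i'
      have hij : k + 2 * (i : ℕ) - 1 + 2 ≤ k + 2 * j - 1 := by
        have := i.2
        omega
      have h2 : c i + 2 * a ≤ c j := by
        calc c (i : ℕ) + 2 * a = a * ((k + 2 * (i : ℕ) - 1) + 2) := by
              simp only [hc]; ring
          _ ≤ a * (k + 2 * j - 1) := Nat.mul_le_mul_left a hij
      have hi' : (i' : ℕ) + 1 ≤ a := i'.2
      have hfin : c (i : ℕ) + (i' : ℕ) + 1 + a ≤ c j := by omega
      have hcast := (Nat.cast_le (α := ℤ)).2 hfin
      push_cast at hcast
      rw [ht]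
      omega
    have hfut : ∀ i' : Fin a, t + (a : ℕ) ≤ ((c j + i' + 1 : ℕ) : ℤ) := by
      intro i'
      rw [ht]
      push_cast
      omega
    set φp : ({s : ℤ // s ≤ t} → 𝒵) → (Fin j → Fin a → 𝒵) :=
      fun g i i' => g ⟨((c i + i' + 1 : ℕ) : ℤ), hpast i i'⟩ with hφp
    set φf : ({s : ℤ // t + (a : ℕ) ≤ s} → 𝒵) → (Fin a → 𝒵) :=
      fun g i' => g ⟨((c j + i' + 1 : ℕ) : ℤ), hfut i'⟩ with hφf
    have hφpm : Measurable φp :=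
      measurable_pi_lambda _ fun i => measurable_pi_lambda _ fun i' => measurable_pi_apply _
    have hφfm : Measurable φf := measurable_pi_lambda _ fun i' => measurable_pi_apply _
    have hpastm : Measurable (fun ω => fun s : {s : ℤ // s ≤ t} => Z s ω) :=
      measurable_pi_lambda _ fun s => hZmeas _
    have hfutm : Measurable (fun ω => fun s : {s : ℤ // t + (a : ℕ) ≤ s} => Z s ω) :=
      measurable_pi_lambda _ fun s => hZmeas _
    set Jm := P.map (fun ω => (fun s : {s : ℤ // s ≤ t} => Z s ω,
                      fun s : {s : ℤ // t + (a : ℕ) ≤ s} => Z s ω)) with hJm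
    set Pm := (P.map (fun ω => fun s : {s : ℤ // s ≤ t} => Z s ω)).prod
      (P.map (fun ω => fun s : {s : ℤ // t + (a : ℕ) ≤ s} => Z s ω)) with hPm
    haveI : IsProbabilityMeasure Jm :=
      Measure.isProbabilityMeasure_map (hpastm.prodMk hfutm).aemeasurable
    haveI : IsProbabilityMeasure (P.map (fun ω => fun s : {s : ℤ // s ≤ t} => Z s ω)) :=
      Measure.isProbabilityMeasure_map hpastm.aemeasurable
    haveI : IsProbabilityMeasure
        (P.map (fun ω => fun s : {s : ℤ // t + (a : ℕ) ≤ s} => Z s ω)) :=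
      Measure.isProbabilityMeasure_map hfutm.aemeasurable
    haveI : IsProbabilityMeasure Pm := by rw [hPm]; infer_instance
    set Φ : (({s : ℤ // s ≤ t} → 𝒵) × ({s : ℤ // t + (a : ℕ) ≤ s} → 𝒵))
        → ((Fin a → 𝒵) × (Fin j → Fin a → 𝒵)) := fun p => (φf p.2, φp p.1) with hΦ
    have hΦm : Measurable Φ :=
      (hφfm.comp measurable_snd).prodMk (hφpm.comp measurable_fst)
    have hA : P.map (fun ω => (X j ω, fun i : Fin j => X (i : ℕ) ω)) = Jm.map Φ := by
      rw [hJm, Measure.map_map hΦm (hpastm.prodMk hfutm)]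
      rfl
    have hB : νb.prod (P.map (fun ω => fun i : Fin j => X (i : ℕ) ω)) = Pm.map Φ := by
      have hswap : Φ = (Prod.map φf φp) ∘ Prod.swap := rfl
      rw [hPm, hswap, ← Measure.map_map (hφfm.prodMap hφpm) measurable_swap,
        Measure.prod_swap, ← Measure.map_prod_map _ _ hφfm hφpm,
        Measure.map_map hφfm hfutm, Measure.map_map hφpm hpastm]
      congr 1
      rw [← hlaw j]
      rfl
    rw [hA, hB, Measure.map_apply hΦm hS, Measure.map_apply hΦm hS]
    calc |(Jm (Φ ⁻¹' S)).toReal - (Pm (Φ ⁻¹' S)).toReal| ≤ tvDist Jm Pm :=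
        abs_le_tvDist _ _ (hΦm hS)
      _ ≤ betaMix P Z a := tvDist_le_betaMix P Z hZmeas a t
  -- the bad event, as a set of block configurations
  set S : Set (Fin μ → Fin a → 𝒵) := {x | ∃ f ∈ ℱ,
      ∫ ω', f (Z 1 ω') ∂P
        - (1 / μ) * ∑ j : Fin μ, (1 / a) * ∑ i : Fin a, f (x j i) ≥ ε} with hSdef
  have hSmeas : MeasurableSet S := by
    have hrw : S = ⋃ f ∈ ℱ, {x : Fin μ → Fin a → 𝒵 |
        (ε : ℝ) ≤ ∫ ω', f (Z 1 ω') ∂P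
          - (1 / μ) * ∑ j : Fin μ, (1 / a) * ∑ i : Fin a, f (x j i)} := by
      ext x
      simp only [hSdef, Set.mem_setOf_eq, Set.mem_iUnion, ge_iff_le, exists_prop]
    rw [hrw]
    refine MeasurableSet.biUnion ℱ.countable_toSet fun f hf => ?_
    have hg : Measurable (fun x : Fin μ → Fin a → 𝒵 =>
        ∫ ω', f (Z 1 ω') ∂P - (1 / μ) * ∑ j : Fin μ, (1 / a) * ∑ i : Fin a, f (x j i)) := by
      refine Measurable.sub measurable_const (Measurable.const_mul ?_ _)
      refine Finset.measurable_sum _ fun j _ => Measurable.const_mul ?_ _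
      refine Finset.measurable_sum _ fun i _ => ?_
      exact (hFmeas f hf).comp ((measurable_pi_apply i).comp (measurable_pi_apply j))
    exact measurableSet_le measurable_const hg
  have key := hybrid_chain P νb X hX (betaMix P Z a) hlaw hmix μ hμ S hSmeas
  refine le_trans (le_of_eq ?_) key
  rw [Measure.map_apply (hXm μ) hSmeas]
  rfl
end

section
/- Let (Z_t)_{t ∈ ℤ} be a stationary 𝒵-valued process with β-mixing coefficients β(k), let a, μ' ≥ 1 be integers, let M > 0, let ℱ be a finite set of measurable functions from 𝒵 to [0, M], and for each ℓ_f ∈ ℱ set L(f) = E[ℓ_f(Z_1)] and L̂^spaced(f) = (1/μ') Σ_{k=1}^{μ'} ℓ_f(Z_{1+(k−1)a}). Let ν' be the product measure on 𝒵^{μ'} each of whose factors is the law of Z_1. Then for every ε > 0: P( ∃ ℓ_f ∈ ℱ : L(f) − L̂^spaced(f) ≥ ε ) ≤ ν'( (z_1, …, z_{μ'}) : ∃ ℓ_f ∈ ℱ, L(f) − (1/μ') Σ_{k=1}^{μ'} ℓ_f(z_k) ≥ ε ) + (μ' − 1) β(a). -/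
open MeasureTheory ProbabilityTheory

section Aux
variable {α : Type*} [MeasurableSpace α]

lemma toReal_prob_le_one (μ : Measure α) [IsProbabilityMeasure μ] (s : Set α) :
    (μ s).toReal ≤ 1 := by
  simpa using ENNReal.toReal_mono (by simp) (prob_le_one (μ := μ) (s := s))

lemma tv_term_le_two (μ ν : Measure α) [IsProbabilityMeasure μ] [IsProbabilityMeasure ν]
    (A : Set α) : |(μ A).toReal - (ν A).toReal| ≤ 2 := by
  rw [abs_sub_le_iff]
  constructor <;>
    [linarith [toReal_prob_le_one μ A, ENNReal.toReal_nonneg (a := ν A)];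
     linarith [toReal_prob_le_one ν A, ENNReal.toReal_nonneg (a := μ A)]]

lemma tvDist_le_two (μ ν : Measure α) [IsProbabilityMeasure μ] [IsProbabilityMeasure ν] :
    tvDist μ ν ≤ 2 :=
  ciSup_le fun A => tv_term_le_two μ ν A

lemma tv_bddAbove (μ ν : Measure α) [IsProbabilityMeasure μ] [IsProbabilityMeasure ν] :
    BddAbove (Set.range fun A : {A : Set α // MeasurableSet A} =>
      |(μ (A : Set α)).toReal - (ν (A : Set α)).toReal|) := by
  refine ⟨2, ?_⟩
  rintro _ ⟨A, rfl⟩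
  exact tv_term_le_two μ ν A

lemma abs_sub_le_tvDist (μ ν : Measure α) [IsProbabilityMeasure μ] [IsProbabilityMeasure ν]
    {A : Set α} (hA : MeasurableSet A) :
    |(μ A).toReal - (ν A).toReal| ≤ tvDist μ ν :=
  le_ciSup (tv_bddAbove μ ν) (⟨A, hA⟩ : {A : Set α // MeasurableSet A})

lemma tvDist_nonneg (μ ν : Measure α) [IsProbabilityMeasure μ] [IsProbabilityMeasure ν] :
    0 ≤ tvDist μ ν :=
  le_trans (abs_nonneg _) (abs_sub_le_tvDist μ ν MeasurableSet.empty)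

end Aux

section Mix
variable {Ω 𝒵 : Type*} [MeasurableSpace Ω] [MeasurableSpace 𝒵]
  (P : Measure Ω) [IsProbabilityMeasure P] (Z : ℤ → Ω → 𝒵)


lemma meas_past (hZ : ∀ t, Measurable (Z t)) (t : ℤ) :
    Measurable (fun ω => fun s : {s : ℤ // s ≤ t} => Z s ω) :=
  measurable_pi_lambda _ fun s => hZ s

lemma meas_fut (hZ : ∀ t, Measurable (Z t)) (t : ℤ) (k : ℕ) :
    Measurable (fun ω => fun s : {s : ℤ // t + k ≤ s} => Z s ω) :=
  measurable_pi_lambda _ fun s => hZ s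

lemma meas_joint (hZ : ∀ t, Measurable (Z t)) (t : ℤ) (k : ℕ) :
    Measurable (fun ω => (fun s : {s : ℤ // s ≤ t} => Z s ω,
                          fun s : {s : ℤ // t + k ≤ s} => Z s ω)) :=
  (meas_past Z hZ t).prodMk (meas_fut Z hZ t k)

lemma le_betaMix (hZ : ∀ t, Measurable (Z t)) (k : ℕ) (t : ℤ) :
    tvDist
      (P.map (fun ω => (fun s : {s : ℤ // s ≤ t} => Z s ω,
                        fun s : {s : ℤ // t + k ≤ s} => Z s ω)))
      ((P.map (fun ω => fun s : {s : ℤ // s ≤ t} => Z s ω)).prod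
        (P.map (fun ω => fun s : {s : ℤ // t + k ≤ s} => Z s ω)))
      ≤ betaMix P Z k := by
  have hbdd : BddAbove (Set.range fun t : ℤ => tvDist
      (P.map (fun ω => (fun s : {s : ℤ // s ≤ t} => Z s ω,
                        fun s : {s : ℤ // t + k ≤ s} => Z s ω)))
      ((P.map (fun ω => fun s : {s : ℤ // s ≤ t} => Z s ω)).prod
        (P.map (fun ω => fun s : {s : ℤ // t + k ≤ s} => Z s ω)))) := by
    refine ⟨2, ?_⟩
    rintro _ ⟨t, rfl⟩
    haveI : IsProbabilityMeasure (P.map (fun ω => (fun s : {s : ℤ // s ≤ t} => Z s ω,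
        fun s : {s : ℤ // t + k ≤ s} => Z s ω))) :=
      Measure.isProbabilityMeasure_map ((meas_joint Z hZ t k).aemeasurable)
    haveI : IsProbabilityMeasure (P.map (fun ω => fun s : {s : ℤ // s ≤ t} => Z s ω)) :=
      Measure.isProbabilityMeasure_map ((meas_past Z hZ t).aemeasurable)
    haveI : IsProbabilityMeasure (P.map (fun ω => fun s : {s : ℤ // t + k ≤ s} => Z s ω)) :=
      Measure.isProbabilityMeasure_map ((meas_fut Z hZ t k).aemeasurable)
    exact tvDist_le_two _ _
  exact le_ciSup hbdd t

lemma betaMix_nonneg (hZ : ∀ t, Measurable (Z t)) (k : ℕ) : 0 ≤ betaMix P Z k := by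
  refine le_trans ?_ (le_betaMix P Z hZ k 0)
  haveI : IsProbabilityMeasure (P.map (fun ω => (fun s : {s : ℤ // s ≤ (0:ℤ)} => Z s ω,
      fun s : {s : ℤ // (0:ℤ) + k ≤ s} => Z s ω))) :=
    Measure.isProbabilityMeasure_map ((meas_joint Z hZ 0 k).aemeasurable)
  haveI : IsProbabilityMeasure (P.map (fun ω => fun s : {s : ℤ // s ≤ (0:ℤ)} => Z s ω)) :=
    Measure.isProbabilityMeasure_map ((meas_past Z hZ 0).aemeasurable)
  haveI : IsProbabilityMeasure (P.map (fun ω => fun s : {s : ℤ // (0:ℤ) + k ≤ s} => Z s ω)) :=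
    Measure.isProbabilityMeasure_map ((meas_fut Z hZ 0 k).aemeasurable)
  exact tvDist_nonneg _ _

omit [IsProbabilityMeasure P] in
lemma law_eq (hZ : ∀ t, Measurable (Z t)) (hstat : Stationary P Z) (c : ℤ) :
    P.map (Z c) = P.map (Z 1) := by
  have h := hstat (c - 1)
  have hm1 : Measurable (fun ω => fun t : ℤ => Z (t + (c - 1)) ω) :=
    measurable_pi_lambda _ fun t => hZ _
  have hm2 : Measurable (fun ω => fun t : ℤ => Z t ω) :=
    measurable_pi_lambda _ fun t => hZ _
  have h2 := congrArg (Measure.map (fun g : ℤ → 𝒵 => g 1)) h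
  rw [Measure.map_map (measurable_pi_apply 1) hm1,
      Measure.map_map (measurable_pi_apply 1) hm2] at h2
  have e1 : ((fun g : ℤ → 𝒵 => g 1) ∘ (fun ω => fun t : ℤ => Z (t + (c - 1)) ω)) = Z c := by
    funext ω
    show Z (1 + (c - 1)) ω = Z c ω
    congr 1
    ring
  have e2 : ((fun g : ℤ → 𝒵 => g 1) ∘ (fun ω => fun t : ℤ => Z t ω)) = Z 1 := rfl
  rwa [e1, e2] at h2

end Mix

section Upd
variable {𝒵 : Type*} [MeasurableSpace 𝒵]

lemma measurable_upd {n : ℕ} (j : Fin n) :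
    Measurable (fun p : (Fin n → 𝒵) × 𝒵 => Function.update p.1 j p.2) := by
  refine measurable_pi_lambda _ fun k => ?_
  by_cases hk : k = j
  · subst hk
    simp only [Function.update_self]
    exact measurable_snd
  · simpa [Function.update_of_ne hk, Function.comp_def] using (measurable_pi_apply k).comp measurable_fst

lemma map_update_pi {n : ℕ} (ν : Measure 𝒵) [IsProbabilityMeasure ν] (j : Fin n) :
    Measure.map (fun p : (Fin n → 𝒵) × 𝒵 => Function.update p.1 j p.2)
      ((Measure.pi fun _ : Fin n => ν).prod ν) = Measure.pi (fun _ : Fin n => ν) := by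
  refine (Measure.pi_eq (μ := fun _ : Fin n => ν) fun s hs => ?_).symm
  rw [Measure.map_apply (measurable_upd j) (MeasurableSet.univ_pi hs)]
  have hset : (fun p : (Fin n → 𝒵) × 𝒵 => Function.update p.1 j p.2) ⁻¹' (Set.pi Set.univ s)
      = (Set.pi Set.univ (Function.update s j Set.univ)) ×ˢ (s j) := by
    ext ⟨x, z⟩
    simp only [Set.mem_preimage, Set.mem_pi, Set.mem_univ, forall_true_left, Set.mem_prod,
      Function.update_apply]
    constructor
    · intro h
      refine ⟨fun k => ?_, by simpa using h j⟩
      by_cases hk : k = j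
      · simp [hk]
      · simpa [hk] using h k
    · rintro ⟨h1, h2⟩ k
      by_cases hk : k = j
      · simpa [hk] using h2
      · simpa [hk] using h1 k
  rw [hset, Measure.prod_prod, Measure.pi_pi]
  have e1 : ∀ k, ν (Function.update s j Set.univ k) =
      Function.update (fun i => ν (s i)) j 1 k := by
    intro k
    simp [Function.update_apply, apply_ite ν]
  calc (∏ k, ν (Function.update s j Set.univ k)) * ν (s j)
      = (∏ k, Function.update (fun i => ν (s i)) j 1 k) * ν (s j) := by
        rw [Finset.prod_congr rfl fun k _ => e1 k]
    _ = (∏ k ∈ Finset.univ.erase j, ν (s k)) * ν (s j) := by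
        rw [Finset.prod_update_of_mem (Finset.mem_univ j), one_mul,
          Finset.sdiff_singleton_eq_erase]
    _ = ∏ k, ν (s k) := by
        rw [mul_comm]
        exact Finset.mul_prod_erase Finset.univ (fun k => ν (s k)) (Finset.mem_univ j)

end Upd

section ProdMap
variable {α β γ : Type*} [MeasurableSpace α] [MeasurableSpace β] [MeasurableSpace γ]

lemma prod_map_right (ρ : Measure α) (μ : Measure β) [SFinite ρ] [SFinite μ]
    {g : β → γ} (hg : Measurable g) :
    ρ.prod (μ.map g) = (ρ.prod μ).map (Prod.map id g) := by
  conv_lhs => rw [show ρ = ρ.map id from (Measure.map_id).symm]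
  exact Measure.map_prod_map ρ μ measurable_id hg

end ProdMap
/-- Coupling step for the spaced-points technique: the probability that some `f ∈ ℱ`
has a deviation at least `ε` between its risk `L f = E[f (Z 1)]` and its empirical
risk on the spaced sample `(Z 1, Z (1+a), …, Z (1+(μ'-1)a))` is at most the
corresponding probability for an i.i.d. sample (under the product measure with
factors the law `ν1` of `Z 1`) plus `(μ'-1)β(a)`. -/
theorem spaced_points_coupling_deviation
    {Ω 𝒵 : Type*} [MeasurableSpace Ω] [MeasurableSpace 𝒵]
    (P : Measure Ω) [IsProbabilityMeasure P]
    (Z : ℤ → Ω → 𝒵) (hZmeas : ∀ t, Measurable (Z t))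
    (hstat : Stationary P Z)
    (a μ' : ℕ) (ha : 1 ≤ a) (hμ' : 1 ≤ μ')
    (M : ℝ) (hM : 0 < M)
    (ℱ : Finset (𝒵 → ℝ))
    (hFmeas : ∀ f ∈ ℱ, Measurable f)
    (hFbdd : ∀ f ∈ ℱ, ∀ z, f z ∈ Set.Icc (0 : ℝ) M)
    (ν1 : Measure 𝒵) [IsProbabilityMeasure ν1]
    (hν1 : ν1 = P.map (Z 1))
    (ε : ℝ) (hε : 0 < ε) :
    (P {ω | ∃ f ∈ ℱ,
        ∫ ω', f (Z 1 ω') ∂P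
          - (1 / μ') * ∑ k : Fin μ', f (Z ((1 + (k : ℕ) * a : ℕ) : ℤ) ω)
          ≥ ε}).toReal
      ≤ (Measure.pi (fun _ : Fin μ' => ν1) {x | ∃ f ∈ ℱ,
          ∫ ω', f (Z 1 ω') ∂P - (1 / μ') * ∑ k : Fin μ', f (x k) ≥ ε}).toReal
        + ((μ' : ℝ) - 1) * betaMix P Z a := by
  classical
  have hβ0 : 0 ≤ betaMix P Z a := betaMix_nonneg P Z hZmeas a
  set ρ : Measure (Fin μ' → 𝒵) := Measure.pi (fun _ : Fin μ' => ν1) with hρdef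
  set S : Set (Fin μ' → 𝒵) := {x | ∃ f ∈ ℱ,
      ∫ ω', f (Z 1 ω') ∂P - (1 / μ') * ∑ k : Fin μ', f (x k) ≥ ε} with hSdef
  have hSmeas : MeasurableSet S := by
    have hU : S = ⋃ f ∈ ℱ, {x : Fin μ' → 𝒵 |
        ∫ ω', f (Z 1 ω') ∂P - (1 / μ') * ∑ k : Fin μ', f (x k) ≥ ε} := by
      ext x; simp [hSdef]
    rw [hU]
    refine MeasurableSet.biUnion ℱ.countable_toSet fun f hf => ?_
    have hg : Measurable fun x : Fin μ' → 𝒵 =>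
        ∫ ω', f (Z 1 ω') ∂P - (1 / μ') * ∑ k : Fin μ', f (x k) :=
      measurable_const.sub (measurable_const.mul
        (Finset.measurable_sum Finset.univ fun k _ =>
          (hFmeas f hf).comp (measurable_pi_apply k)))
    exact measurableSet_le measurable_const hg
  let V : Ω → Fin μ' → 𝒵 := fun ω k => Z ((1 + (k : ℕ) * a : ℕ) : ℤ) ω
  have hV : Measurable V := measurable_pi_lambda _ fun k => hZmeas _
  let φ : ℕ → (Fin μ' → 𝒵) × Ω → Fin μ' → 𝒵 := fun j p k =>
    if (k : ℕ) < j then p.1 k else Z ((1 + (k : ℕ) * a : ℕ) : ℤ) p.2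
  have hφ : ∀ j, Measurable (φ j) := by
    intro j
    refine measurable_pi_lambda _ fun k => ?_
    by_cases hk : (k : ℕ) < j
    · simpa [φ, hk, Function.comp_def] using (measurable_pi_apply k).comp
        (measurable_fst : Measurable fun p : (Fin μ' → 𝒵) × Ω => p.1)
    · simpa [φ, hk, Function.comp_def] using (hZmeas _).comp
        (measurable_snd : Measurable fun p : (Fin μ' → 𝒵) × Ω => p.2)
  let H : ℕ → Measure (Fin μ' → 𝒵) := fun j => (ρ.prod P).map (φ j)
  -- the coupling step
  have step : ∀ j, j < μ' → (H j S).toReal ≤ (H (j + 1) S).toReal + betaMix P Z a := by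
    intro j hj
    set t : ℤ := ((1 + j * a : ℕ) : ℤ) with ht
    have hidx : ∀ k : Fin μ', j < (k : ℕ) → t + (a : ℕ) ≤ ((1 + (k : ℕ) * a : ℕ) : ℤ) := by
      intro k hk
      have h1 : (j + 1) * a ≤ (k : ℕ) * a := Nat.mul_le_mul_right a hk
      have h1' : ((j + 1) * a : ℤ) ≤ ((k : ℕ) : ℤ) * a := by exact_mod_cast h1
      rw [ht]
      push_cast
      linarith
    have hpast : Measurable (fun ω => fun s : {s : ℤ // s ≤ t} => Z s ω) :=
      meas_past Z hZmeas t
    have hfut : Measurable (fun ω => fun s : {s : ℤ // t + (a : ℕ) ≤ s} => Z s ω) :=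
      meas_fut Z hZmeas t a
    have hjoint : Measurable (fun ω => (fun s : {s : ℤ // s ≤ t} => Z s ω,
        fun s : {s : ℤ // t + (a : ℕ) ≤ s} => Z s ω)) := meas_joint Z hZmeas t a
    let J : Measure (({s : ℤ // s ≤ t} → 𝒵) × ({s : ℤ // t + (a : ℕ) ≤ s} → 𝒵)) :=
      P.map (fun ω => (fun s : {s : ℤ // s ≤ t} => Z s ω,
        fun s : {s : ℤ // t + (a : ℕ) ≤ s} => Z s ω))
    let K : Measure (({s : ℤ // s ≤ t} → 𝒵) × ({s : ℤ // t + (a : ℕ) ≤ s} → 𝒵)) :=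
      (P.map (fun ω => fun s : {s : ℤ // s ≤ t} => Z s ω)).prod
        (P.map (fun ω => fun s : {s : ℤ // t + (a : ℕ) ≤ s} => Z s ω))
    haveI hJP : IsProbabilityMeasure J := Measure.isProbabilityMeasure_map hjoint.aemeasurable
    haveI : IsProbabilityMeasure (P.map (fun ω => fun s : {s : ℤ // s ≤ t} => Z s ω)) :=
      Measure.isProbabilityMeasure_map hpast.aemeasurable
    haveI : IsProbabilityMeasure
        (P.map (fun ω => fun s : {s : ℤ // t + (a : ℕ) ≤ s} => Z s ω)) :=
      Measure.isProbabilityMeasure_map hfut.aemeasurable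
    haveI hKP : IsProbabilityMeasure K := by
      show IsProbabilityMeasure (Measure.prod _ _); infer_instance
    have htv : tvDist J K ≤ betaMix P Z a := le_betaMix P Z hZmeas a t
    let Φ : (Fin μ' → 𝒵) × (({s : ℤ // s ≤ t} → 𝒵) × ({s : ℤ // t + (a : ℕ) ≤ s} → 𝒵))
        → Fin μ' → 𝒵 :=
      fun p k => if (k : ℕ) < j then p.1 k
        else if h2 : j < (k : ℕ) then p.2.2 ⟨((1 + (k : ℕ) * a : ℕ) : ℤ), hidx k h2⟩
        else p.2.1 ⟨t, le_rfl⟩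
    have hΦ : Measurable Φ := by
      refine measurable_pi_lambda _ fun k => ?_
      by_cases hk : (k : ℕ) < j
      · simpa [Φ, hk, Function.comp_def] using (measurable_pi_apply k).comp
          (measurable_fst : Measurable fun p :
            (Fin μ' → 𝒵) × (({s : ℤ // s ≤ t} → 𝒵) × ({s : ℤ // t + (a : ℕ) ≤ s} → 𝒵)) => p.1)
      · by_cases hk2 : j < (k : ℕ)
        · simpa [Φ, hk, hk2, Function.comp_def] using (measurable_pi_apply
            (⟨((1 + (k : ℕ) * a : ℕ) : ℤ), hidx k hk2⟩ : {s : ℤ // t + (a : ℕ) ≤ s})).comp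
            (measurable_snd.comp measurable_snd)
        · simpa [Φ, hk, hk2, Function.comp_def] using (measurable_pi_apply
            (⟨t, le_rfl⟩ : {s : ℤ // s ≤ t})).comp (measurable_fst.comp measurable_snd)
    -- claim 1 : H j = (ρ.prod J).map Φ
    have hc1 : H j = (ρ.prod J).map Φ := by
      show (ρ.prod P).map (φ j) = (ρ.prod J).map Φ
      have hprod : ρ.prod J = (ρ.prod P).map
          (Prod.map id (fun ω => (fun s : {s : ℤ // s ≤ t} => Z s ω,
            fun s : {s : ℤ // t + (a : ℕ) ≤ s} => Z s ω))) :=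
        prod_map_right ρ P hjoint
      rw [hprod, Measure.map_map hΦ (measurable_id.prodMap hjoint)]
      congr 1
      funext p
      funext k
      by_cases hk : (k : ℕ) < j
      · simp [φ, Φ, hk]
      · by_cases hk2 : j < (k : ℕ)
        · simp [φ, Φ, hk, hk2]
        · have hkj : (k : ℕ) = j := by omega
          simp only [φ, Φ, Function.comp_apply, Prod.map_apply, id_eq, hk, hk2,
            if_false, dif_neg, not_false_iff]
          show Z ((1 + (k : ℕ) * a : ℕ) : ℤ) p.2 = Z t p.2
          rw [ht, hkj]
    -- claim 2 : replacing the joint law by the product of marginals costs β(a)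
    have hT : MeasurableSet (Φ ⁻¹' S) := hΦ hSmeas
    have hineq : (ρ.prod J) (Φ ⁻¹' S) ≤ (ρ.prod K) (Φ ⁻¹' S)
        + ENNReal.ofReal (betaMix P Z a) := by
      rw [Measure.prod_apply hT, Measure.prod_apply hT]
      have hpoint : ∀ x, J (Prod.mk x ⁻¹' (Φ ⁻¹' S))
          ≤ K (Prod.mk x ⁻¹' (Φ ⁻¹' S)) + ENNReal.ofReal (betaMix P Z a) := by
        intro x
        have hm : MeasurableSet (Prod.mk x ⁻¹' (Φ ⁻¹' S)) :=
          hT.preimage measurable_prodMk_left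
        have h1 : (J (Prod.mk x ⁻¹' (Φ ⁻¹' S))).toReal
            - (K (Prod.mk x ⁻¹' (Φ ⁻¹' S))).toReal ≤ betaMix P Z a :=
          (le_abs_self _).trans ((abs_sub_le_tvDist J K hm).trans htv)
        calc J (Prod.mk x ⁻¹' (Φ ⁻¹' S))
            = ENNReal.ofReal (J (Prod.mk x ⁻¹' (Φ ⁻¹' S))).toReal :=
              (ENNReal.ofReal_toReal (measure_ne_top _ _)).symm
          _ ≤ ENNReal.ofReal ((K (Prod.mk x ⁻¹' (Φ ⁻¹' S))).toReal + betaMix P Z a) :=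
              ENNReal.ofReal_le_ofReal (by linarith)
          _ = ENNReal.ofReal (K (Prod.mk x ⁻¹' (Φ ⁻¹' S))).toReal
              + ENNReal.ofReal (betaMix P Z a) :=
              ENNReal.ofReal_add ENNReal.toReal_nonneg hβ0
          _ = K (Prod.mk x ⁻¹' (Φ ⁻¹' S)) + ENNReal.ofReal (betaMix P Z a) := by
              rw [ENNReal.ofReal_toReal (measure_ne_top _ _)]
      calc ∫⁻ x, J (Prod.mk x ⁻¹' (Φ ⁻¹' S)) ∂ρ
          ≤ ∫⁻ x, (K (Prod.mk x ⁻¹' (Φ ⁻¹' S)) + ENNReal.ofReal (betaMix P Z a)) ∂ρ :=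
            lintegral_mono hpoint
        _ = (∫⁻ x, K (Prod.mk x ⁻¹' (Φ ⁻¹' S)) ∂ρ) + ENNReal.ofReal (betaMix P Z a) := by
            rw [lintegral_add_right _ measurable_const, lintegral_const, measure_univ, mul_one]
    have hstep2 : ((ρ.prod J).map Φ S).toReal
        ≤ ((ρ.prod K).map Φ S).toReal + betaMix P Z a := by
      rw [Measure.map_apply hΦ hSmeas, Measure.map_apply hΦ hSmeas]
      have hfin : (ρ.prod K) (Φ ⁻¹' S) + ENNReal.ofReal (betaMix P Z a) ≠ ⊤ :=
        ENNReal.add_ne_top.2 ⟨measure_ne_top _ _, ENNReal.ofReal_ne_top⟩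
      have h2 := ENNReal.toReal_mono hfin hineq
      rwa [ENNReal.toReal_add (measure_ne_top _ _) ENNReal.ofReal_ne_top,
        ENNReal.toReal_ofReal hβ0] at h2
    -- claim 3 : (ρ.prod K).map Φ = H (j+1)
    have hZt : P.map (Z t) = ν1 := by rw [hν1]; exact law_eq P Z hZmeas hstat t
    let W : Measure ({s : ℤ // t + (a : ℕ) ≤ s} → 𝒵) :=
      P.map (fun ω => fun s : {s : ℤ // t + (a : ℕ) ≤ s} => Z s ω)
    let Θ : (Fin μ' → 𝒵) × (𝒵 × ({s : ℤ // t + (a : ℕ) ≤ s} → 𝒵)) → Fin μ' → 𝒵 :=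
      fun p k => if (k : ℕ) < j then p.1 k
        else if h2 : j < (k : ℕ) then p.2.2 ⟨((1 + (k : ℕ) * a : ℕ) : ℤ), hidx k h2⟩
        else p.2.1
    have hΘ : Measurable Θ := by
      refine measurable_pi_lambda _ fun k => ?_
      by_cases hk : (k : ℕ) < j
      · simpa [Θ, hk, Function.comp_def] using (measurable_pi_apply k).comp
          (measurable_fst : Measurable fun p :
            (Fin μ' → 𝒵) × (𝒵 × ({s : ℤ // t + (a : ℕ) ≤ s} → 𝒵)) => p.1)
      · by_cases hk2 : j < (k : ℕ)
        · simpa [Θ, hk, hk2, Function.comp_def] using (measurable_pi_apply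
            (⟨((1 + (k : ℕ) * a : ℕ) : ℤ), hidx k hk2⟩ : {s : ℤ // t + (a : ℕ) ≤ s})).comp
            (measurable_snd.comp measurable_snd)
        · simpa [Θ, hk, hk2, Function.comp_def] using measurable_fst.comp
            (measurable_snd : Measurable fun p :
              (Fin μ' → 𝒵) × (𝒵 × ({s : ℤ // t + (a : ℕ) ≤ s} → 𝒵)) => p.2)
    have hev : Measurable (fun p : {s : ℤ // s ≤ t} → 𝒵 => p ⟨t, le_rfl⟩) :=
      measurable_pi_apply _
    have e1 : (ρ.prod K).map Φ = (ρ.prod (ν1.prod W)).map Θ := by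
      have hevpast : (P.map (fun ω => fun s : {s : ℤ // s ≤ t} => Z s ω)).map
          (fun p : {s : ℤ // s ≤ t} → 𝒵 => p ⟨t, le_rfl⟩) = P.map (Z t) := by
        rw [Measure.map_map hev hpast]
        rfl
      have h1 : ν1.prod W = K.map
          (Prod.map (fun p : {s : ℤ // s ≤ t} → 𝒵 => p ⟨t, le_rfl⟩) id) := by
        show ν1.prod W = Measure.map _ K
        rw [← Measure.map_prod_map _ _ hev measurable_id, Measure.map_id, hevpast, hZt]
      rw [h1, prod_map_right ρ K (hev.prodMap measurable_id),
        Measure.map_map hΘ (measurable_id.prodMap (hev.prodMap measurable_id))]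
      congr 1
    have e2 : H (j + 1) = (ρ.prod (ν1.prod W)).map Θ := by
      show (ρ.prod P).map (φ (j + 1)) = _
      set jF : Fin μ' := ⟨j, hj⟩ with hjF
      have h2 : ρ.prod P = ((ρ.prod ν1).prod P).map
          (Prod.map (fun p : (Fin μ' → 𝒵) × 𝒵 => Function.update p.1 jF p.2) id) := by
        calc ρ.prod P
            = ((ρ.prod ν1).map (fun p : (Fin μ' → 𝒵) × 𝒵 => Function.update p.1 jF p.2)).prod
              (P.map id) := by rw [Measure.map_id, hρdef, map_update_pi]
          _ = ((ρ.prod ν1).prod P).map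
              (Prod.map (fun p : (Fin μ' → 𝒵) × 𝒵 => Function.update p.1 jF p.2) id) :=
              Measure.map_prod_map _ _ (measurable_upd jF) measurable_id
      have h3 : ((ρ.prod ν1).prod P).map MeasurableEquiv.prodAssoc = ρ.prod (ν1.prod P) :=
        (measurePreserving_prodAssoc ρ ν1 P).map_eq
      have h4 : (ρ.prod (ν1.prod P)).map
          (Prod.map id (Prod.map id (fun ω => fun s : {s : ℤ // t + (a : ℕ) ≤ s} => Z s ω)))
          = ρ.prod (ν1.prod W) := by
        rw [← prod_map_right ρ (ν1.prod P) (measurable_id.prodMap hfut),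
          ← prod_map_right ν1 P hfut]
      have hfun : φ (j + 1) ∘ (Prod.map (fun p : (Fin μ' → 𝒵) × 𝒵 =>
            Function.update p.1 jF p.2) id)
          = (Θ ∘ (Prod.map id (Prod.map id
              (fun ω => fun s : {s : ℤ // t + (a : ℕ) ≤ s} => Z s ω))))
            ∘ MeasurableEquiv.prodAssoc := by
        funext p
        obtain ⟨⟨x, z⟩, ω⟩ := p
        funext k
        by_cases hk : (k : ℕ) < j
        · have hk1 : (k : ℕ) < j + 1 := by omega
          have hkj : k ≠ jF := by
            intro h
            rw [h, hjF] at hk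
            exact lt_irrefl j hk
          simp [φ, Θ, MeasurableEquiv.prodAssoc, hk, hk1, Function.update_of_ne hkj, Nat.lt_asymm hk]
        · by_cases hk2 : j < (k : ℕ)
          · have hk1 : ¬ (k : ℕ) < j + 1 := by omega
            simp [φ, Θ, MeasurableEquiv.prodAssoc, hk, hk2, hk1]
          · have hkj : k = jF := by
              apply Fin.ext
              show (k : ℕ) = j
              omega
            have hk1 : (k : ℕ) < j + 1 := by omega
            simp [φ, Θ, MeasurableEquiv.prodAssoc, hk, hk2, hk1, hkj, hjF]
      rw [h2, Measure.map_map (hφ (j + 1)) ((measurable_upd jF).prodMap measurable_id), hfun,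
        ← Measure.map_map (hΘ.comp (measurable_id.prodMap (measurable_id.prodMap hfut)))
          MeasurableEquiv.prodAssoc.measurable,
        h3,
        ← Measure.map_map hΘ (measurable_id.prodMap (measurable_id.prodMap hfut)),
        h4]
    calc (H j S).toReal = ((ρ.prod J).map Φ S).toReal := by rw [hc1]
      _ ≤ ((ρ.prod K).map Φ S).toReal + betaMix P Z a := hstep2
      _ = (H (j + 1) S).toReal + betaMix P Z a := by rw [e1, ← e2]
  -- iterate the coupling step
  have chain : ∀ m : ℕ, m ≤ μ' - 1 →
      (H 0 S).toReal ≤ (H m S).toReal + (m : ℝ) * betaMix P Z a := by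
    intro m
    induction m with
    | zero => intro _; simp
    | succ m ih =>
      intro hm
      have h1 := ih (by omega)
      have h2 := step m (by omega)
      push_cast
      push_cast at h1
      linarith
  have hfinal := chain (μ' - 1) le_rfl
  -- identify the endpoints
  have hH0 : H 0 = P.map V := by
    show (ρ.prod P).map (φ 0) = P.map V
    have hφ0 : φ 0 = V ∘ Prod.snd := by
      funext p
      funext k
      simp [φ, V]
    rw [hφ0, ← Measure.map_map hV measurable_snd, Measure.map_snd_prod, measure_univ, one_smul]
  have hHlast : H (μ' - 1) = ρ := by
    show (ρ.prod P).map (φ (μ' - 1)) = ρ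
    set tL : ℤ := ((1 + (μ' - 1) * a : ℕ) : ℤ) with htL
    set jL : Fin μ' := ⟨μ' - 1, by omega⟩ with hjL
    have hφL : φ (μ' - 1) = (fun p : (Fin μ' → 𝒵) × 𝒵 => Function.update p.1 jL p.2)
        ∘ (Prod.map id (Z tL)) := by
      funext p
      funext k
      by_cases hk : (k : ℕ) < μ' - 1
      · have hkj : k ≠ jL := by
          intro h
          rw [h, hjL] at hk
          exact lt_irrefl _ hk
        simp [φ, hk, Function.update_of_ne hkj]
      · have hkj : k = jL := by
          apply Fin.ext
          show (k : ℕ) = μ' - 1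
          have hkk := k.isLt
          omega
        have hkv : (k : ℕ) = μ' - 1 := by rw [hkj]
        have e : ((1 + (k : ℕ) * a : ℕ) : ℤ) = tL := by rw [htL, hkv]
        show (if (k : ℕ) < μ' - 1 then p.1 k else Z ((1 + (k : ℕ) * a : ℕ) : ℤ) p.2)
            = Function.update p.1 jL (Z tL p.2) k
        rw [if_neg hk, e, hkj, Function.update_self]
    rw [hφL, ← Measure.map_map (measurable_upd jL) (measurable_id.prodMap (hZmeas tL)),
      ← prod_map_right ρ P (hZmeas tL),
      show P.map (Z tL) = ν1 from by rw [hν1]; exact law_eq P Z hZmeas hstat tL,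
      hρdef, map_update_pi]
  rw [hH0, hHlast] at hfinal
  have hsetEq : {ω | ∃ f ∈ ℱ,
      ∫ ω', f (Z 1 ω') ∂P
        - (1 / μ') * ∑ k : Fin μ', f (Z ((1 + (k : ℕ) * a : ℕ) : ℤ) ω) ≥ ε}
      = V ⁻¹' S := rfl
  rw [hsetEq, ← Measure.map_apply hV hSmeas]
  have hcast : ((μ' - 1 : ℕ) : ℝ) = (μ' : ℝ) - 1 := by
    have h := hμ'
    push_cast [Nat.cast_sub hμ']
    ring
  rw [hcast] at hfinal
  exact hfinal
end
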